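/- Let p ∈ (0, 1] and x ∈ [0, 1] with √x ≥ 1 − 4p. Define W = 1 − (1 − √x)/(2p) and φ = −arccos(W). Then the phase-matched attenuation ratio satisfies ς(φ) = 1 − p·[4(2p − 1)·sin²(φ/2)·(cos φ − 1) + 2·sin²φ] = x. -/

import Mathlib

open Real

theorem stmt_12 (p x : ℝ) (hp0 : 0 < p) (hp1 : p ≤ 1) (hx0 : 0 ≤ x) (hx1 : x ≤ 1)
    (hW : Real.sqrt x ≥ 1 - 4 * p) :
    1 - p * (4 * (2 * p - 1)
          * Real.sin ((-Real.arccos (1 - (1 - Real.sqrt x) / (2 * p))) / 2) ^ 2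
          * (Real.cos (-Real.arccos (1 - (1 - Real.sqrt x) / (2 * p))) - 1)
        + 2 * Real.sin (-Real.arccos (1 - (1 - Real.sqrt x) / (2 * p))) ^ 2) = x := by
  set s := Real.sqrt x with hs
  have hs0 : 0 ≤ s := Real.sqrt_nonneg x
  have hs1 : s ≤ 1 := Real.sqrt_le_one.2 hx1
  have hsx : s ^ 2 = x := Real.sq_sqrt hx0
  set W : ℝ := 1 - (1 - s) / (2 * p) with hWdef
  have hp2 : 0 < 2 * p := by linarith
  have hW1 : W ≤ 1 := by
    have : 0 ≤ (1 - s) / (2 * p) := div_nonneg (by linarith) (by linarith)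
    simp [hWdef]; linarith
  have hWm1 : -1 ≤ W := by
    have h4 : 1 - s ≤ 2 * (2 * p) := by linarith
    have : (1 - s) / (2 * p) ≤ 2 := (div_le_iff₀ hp2).2 (by linarith)
    simp [hWdef]; linarith
  have hcos : Real.cos (Real.arccos W) = W := Real.cos_arccos hWm1 hW1
  have h2 : Real.sin ((-Real.arccos W) / 2) ^ 2 = (1 - W) / 2 := by
    have ht : 2 * (Real.arccos W / 2) = Real.arccos W := by ring
    rw [neg_div, Real.sin_neg, neg_sq, Real.sin_sq_eq_half_sub, ht, hcos]
    ring
  have h3 : Real.sin (-Real.arccos W) ^ 2 = 1 - W ^ 2 := by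
    rw [Real.sin_neg, neg_sq, Real.sin_sq, hcos]
  rw [Real.cos_neg, hcos, h2, h3]
  have hWe : W = 1 - (1 - s) / (2 * p) := hWdef
  have hpn : p ≠ 0 := ne_of_gt hp0
  rw [← hsx]
  rw [hWe]
  field_simp [hWe]
  ring
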